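/- Consider the fiscal-cost Bellman recursion $J_N(x,R) = xR$ and $J_k(x,R) = \min_{0 \le u \le R}[xu + (1+\beta u) J_{k+1}(x, R-u)]$ for $\beta \geq 0$ (obtained from price update $x' = x(1+\beta u + \epsilon)$, $\mathbb{E}[\epsilon]=0$, and linearity of $J_{k+1}$ in price). Then for every $k$, every $x > 0$ and $R \geq 0$, the minimum is attained and equals $xR$, and $u = 0$ attains it. -/
import Mathlib


theorem linear_impact_fiscal_bellman
    (N : ℕ) (β : ℝ) (hβ : 0 ≤ β)
    (J : ℕ → ℝ → ℝ → ℝ)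
    (hJN : ∀ x R : ℝ, J N x R = x * R)
    (hJk : ∀ k < N, ∀ x R : ℝ,
      J k x R = sInf {v : ℝ | ∃ u ∈ Set.Icc (0 : ℝ) R,
        v = x * u + (1 + β * u) * J (k + 1) x (R - u)}) :
    ∀ k ≤ N, ∀ x R : ℝ, 0 < x → 0 ≤ R →
      J k x R = x * R ∧
      (k < N →
        IsMinOn (fun u : ℝ => x * u + (1 + β * u) * J (k + 1) x (R - u))
          (Set.Icc 0 R) 0 ∧
        x * 0 + (1 + β * 0) * J (k + 1) x (R - 0) = x * R) := by
  have key : ∀ d k, k + d = N → ∀ x R : ℝ, 0 < x → 0 ≤ R → J k x R = x * R := by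
    intro d
    induction d with
    | zero =>
      intro k hk x R hx hR
      have : k = N := by omega
      rw [this, hJN]
    | succ d ih =>
      intro k hk x R hx hR
      have hkN : k < N := by omega
      have hnext : ∀ R' : ℝ, 0 ≤ R' → J (k+1) x R' = x * R' :=
        fun R' h => ih (k+1) (by omega) x R' hx h
      rw [hJk k hkN x R]
      have hval : ∀ u ∈ Set.Icc (0:ℝ) R,
          x * u + (1 + β * u) * J (k+1) x (R - u) = x * R + β * x * (u * (R - u)) := by
        intro u hu
        rw [hnext (R - u) (by linarith [hu.2])]
        ring
      have hlb : ∀ v ∈ {v : ℝ | ∃ u ∈ Set.Icc (0:ℝ) R,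
          v = x * u + (1 + β * u) * J (k + 1) x (R - u)}, x * R ≤ v := by
        rintro v ⟨u, hu, rfl⟩
        rw [hval u hu]
        have h2 : 0 ≤ β * x * (u * (R - u)) :=
          mul_nonneg (mul_nonneg hβ hx.le) (mul_nonneg hu.1 (by linarith [hu.2]))
        linarith
      have hmem : x * R ∈ {v : ℝ | ∃ u ∈ Set.Icc (0:ℝ) R,
          v = x * u + (1 + β * u) * J (k + 1) x (R - u)} := by
        refine ⟨0, ⟨le_refl 0, hR⟩, ?_⟩
        rw [hnext (R - 0) (by linarith)]
        ring
      exact le_antisymm (csInf_le ⟨x * R, hlb⟩ hmem)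
        (le_csInf ⟨x * R, hmem⟩ hlb)
  intro k hk x R hx hR
  refine ⟨key (N - k) k (by omega) x R hx hR, fun hkN => ?_⟩
  have hnext : ∀ R' : ℝ, 0 ≤ R' → J (k+1) x R' = x * R' :=
    fun R' h => key (N - (k+1)) (k+1) (by omega) x R' hx h
  constructor
  · intro u hu
    simp only [Set.mem_setOf_eq]
    rw [hnext (R - u) (by linarith [hu.2]), hnext (R - 0) (by linarith)]
    have h2 : 0 ≤ β * x * (u * (R - u)) :=
      mul_nonneg (mul_nonneg hβ hx.le) (mul_nonneg hu.1 (by linarith [hu.2]))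
    nlinarith [h2]
  · rw [hnext (R - 0) (by linarith)]
    ring
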